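/- If 1/2 < α < 1 and p = |f''(0)|/(2(1-α)) ≤ (3α-1)/(5α-1) for a convex mapping f of order α, then 2(1-α)·(1 + α·(1+p)/(1-p)) ≤ 8α(1-α), and hence (1-|z|²)²|Sf(z)| ≤ 8α(1-α) for all z in the unit disk. -/

import Mathlib

open Metric Set


set_option maxHeartbeats 1000000 in
lemma sb_key (α p t v : ℝ) (hα0 : 1 / 2 < α) (hα1 : α < 1)
    (hp0 : 0 ≤ p) (hp1 : p < 1) (ht0 : 0 ≤ t) (ht1 : t < 1)
    (hv0 : 0 ≤ v) (hv1 : v ≤ 1) (hsp : v * (1 + p * t) ≤ p + t) :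
    (1 - t ^ 2) * (1 - v ^ 2) + α * v ^ 2 * (1 - t ^ 2) ^ 2 ≤ 4 * α * (1 - t * v) ^ 2 := by
  have hβ0 : 0 < 1 - α + α * t ^ 2 := by nlinarith
  have ht2 : 0 < 1 - t ^ 2 := by nlinarith
  have hgoal : (1 - t ^ 2) * (1 - v ^ 2) + α * v ^ 2 * (1 - t ^ 2) ^ 2
      = (1 - t ^ 2) * (1 - (1 - α + α * t ^ 2) * v ^ 2) := by ring
  rw [hgoal]
  have htv : 0 < 1 - t * v := by nlinarith
  have h2 : 0 < 1 - α := by linarith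
  rcases le_or_gt (t * α) (p * (1 - α)) with hcase | hcase
  · -- Case A : small t
    have hA : ((1 - α) * (1 - t ^ 2)) * (1 - (1 - α + α * t ^ 2) * v ^ 2)
        ≤ (1 - α + α * t ^ 2) * (1 - t * v) ^ 2 := by
      nlinarith [sq_nonneg (t - (1 - α + α * t ^ 2) * v)]
    have hsq : t * α * (t * α) ≤ p * (1 - α) * (p * (1 - α)) := by
      have := mul_le_mul hcase hcase (by positivity) (by positivity); linarith
    have hp2 : p ^ 2 ≤ 1 := by nlinarith
    have h3 : α ^ 2 * t ^ 2 ≤ (1 - α) ^ 2 := by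
      nlinarith [mul_le_mul_of_nonneg_right hp2 (sq_nonneg (1 - α))]
    have hb4 : 1 - α + α * t ^ 2 ≤ 4 * α * (1 - α) := by
      nlinarith [sq_nonneg (2 * α - 1)]
    have hx : (1 - α) * ((1 - t ^ 2) * (1 - (1 - α + α * t ^ 2) * v ^ 2))
        ≤ (1 - α) * (4 * α * (1 - t * v) ^ 2) := by
      nlinarith [sq_nonneg (1 - t * v), mul_le_mul_of_nonneg_right hb4 (sq_nonneg (1 - t * v))]
    exact le_of_mul_le_mul_left hx h2
  · -- Case B
    have h1 : 0 ≤ (p + t) - v * (1 + p * t) := by linarith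
    have h4 : 0 ≤ t * α - p * (1 - α) := by linarith
    have h3 : 0 ≤ t - (1 - α + α * t ^ 2) * v := by nlinarith
    have hB1 : (1 - (1 - α + α * t ^ 2) * v ^ 2) * (1 - t ^ 2) ^ 2
        ≤ ((1 + p * t) ^ 2 - (1 - α + α * t ^ 2) * (p + t) ^ 2) * (1 - t * v) ^ 2 := by
      have hid : ((1 + p * t) ^ 2 - (1 - α + α * t ^ 2) * (p + t) ^ 2) * (1 - t * v) ^ 2
          - (1 - (1 - α + α * t ^ 2) * v ^ 2) * (1 - t ^ 2) ^ 2
          = ((p + t) - v * (1 + p * t)) *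
            ((t - (1 - α + α * t ^ 2) * v) * (1 - t ^ 2)
              + ((1 - t ^ 2) * (t * α - p * (1 - α))) * (1 - t * v)) := by ring
      have hterm : 0 ≤ ((p + t) - v * (1 + p * t)) *
            ((t - (1 - α + α * t ^ 2) * v) * (1 - t ^ 2)
              + ((1 - t ^ 2) * (t * α - p * (1 - α))) * (1 - t * v)) :=
        mul_nonneg h1 (add_nonneg (mul_nonneg h3 ht2.le)
          (mul_nonneg (mul_nonneg ht2.le h4) htv.le))
      linarith [hid ▸ hterm]
    have hB3 : (1 - p ^ 2) + α * (p + t) ^ 2 ≤ 4 * α := by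
      have h5 : 0 ≤ (1 - p) * ((3 * α - 1) - (1 - α) * p) :=
        mul_nonneg (by linarith) (by nlinarith [mul_le_mul_of_nonneg_left hp1.le h2.le])
      nlinarith [sq_nonneg (1 - t), mul_nonneg hp0 ht0]
    have hB2 : (1 + p * t) ^ 2 - (1 - α + α * t ^ 2) * (p + t) ^ 2
        = ((1 - p ^ 2) + α * (p + t) ^ 2) * (1 - t ^ 2) := by ring
    have hfin : (1 - (1 - α + α * t ^ 2) * v ^ 2) * (1 - t ^ 2) ^ 2
        ≤ 4 * α * (1 - t * v) ^ 2 * (1 - t ^ 2) := by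
      rw [hB2] at hB1
      nlinarith [mul_le_mul_of_nonneg_right hB3 (mul_nonneg (sq_nonneg (1 - t * v)) ht2.le)]
    have hx : (1 - α + α * t ^ 2) * v ^ 2 ≤ 1 := by nlinarith
    nlinarith [hfin]



lemma sb_den_ne {a z : ℂ} (ha : ‖a‖ < 1) (hz : ‖z‖ < 1) :
    (1 : ℂ) - (starRingEnd ℂ) a * z ≠ 0 := by
  intro h
  have h1 : (starRingEnd ℂ) a * z = 1 := by linear_combination -h
  have h2 : ‖(starRingEnd ℂ) a * z‖ = 1 := by rw [h1]; simp
  rw [norm_mul, Complex.norm_conj] at h2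
  nlinarith [norm_nonneg a, norm_nonneg z]

lemma sb_normSq_id (a z : ℂ) :
    Complex.normSq (1 - (starRingEnd ℂ) a * z) - Complex.normSq (z - a)
      = (1 - Complex.normSq a) * (1 - Complex.normSq z) := by
  simp only [Complex.normSq_apply, Complex.mul_re, Complex.mul_im, Complex.sub_re,
    Complex.sub_im, Complex.one_re, Complex.one_im, Complex.conj_re, Complex.conj_im]
  ring

lemma sb_mob_lt {a z : ℂ} (ha : ‖a‖ < 1) (hz : ‖z‖ < 1) :
    ‖(z - a) / (1 - (starRingEnd ℂ) a * z)‖ < 1 := by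
  rw [norm_div, div_lt_one (norm_pos_iff.mpr (sb_den_ne ha hz))]
  refine lt_of_pow_lt_pow_left₀ 2 (norm_nonneg _) ?_
  rw [Complex.sq_norm, Complex.sq_norm]
  have hid := sb_normSq_id a z
  have h1 : Complex.normSq a < 1 := by rw [← Complex.sq_norm]; nlinarith [norm_nonneg a]
  have h2 : Complex.normSq z < 1 := by rw [← Complex.sq_norm]; nlinarith [norm_nonneg z]
  nlinarith

lemma sb_mob_hasDerivAt {a z : ℂ} (ha : ‖a‖ < 1) (hz : ‖z‖ < 1) :
    HasDerivAt (fun w => (w - a) / (1 - (starRingEnd ℂ) a * w))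
      ((1 - (starRingEnd ℂ) a * a) / (1 - (starRingEnd ℂ) a * z) ^ 2) z := by
  have h1 : HasDerivAt (fun w : ℂ => w - a) 1 z := (hasDerivAt_id z).sub_const a
  have h2 : HasDerivAt (fun w : ℂ => 1 - (starRingEnd ℂ) a * w) (-((starRingEnd ℂ) a)) z := by
    simpa using ((hasDerivAt_id z).const_mul ((starRingEnd ℂ) a)).const_sub 1
  have h3 := h1.div h2 (sb_den_ne ha hz)
  refine HasDerivAt.congr_deriv h3 ?_
  have hden := sb_den_ne ha hz
  rw [div_left_inj' (pow_ne_zero 2 hden)]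
  ring

lemma sb_mob_diffOn {a : ℂ} (ha : ‖a‖ < 1) :
    DifferentiableOn ℂ (fun w => (w - a) / (1 - (starRingEnd ℂ) a * w)) (ball 0 1) :=
  fun _ hz =>
    ((sb_mob_hasDerivAt ha (mem_ball_zero_iff.1 hz)).differentiableAt).differentiableWithinAt

lemma sb_mob_mapsTo {a : ℂ} (ha : ‖a‖ < 1) :
    MapsTo (fun w => (w - a) / (1 - (starRingEnd ℂ) a * w)) (ball 0 1) (ball 0 1) :=
  fun _ hz => mem_ball_zero_iff.2 (sb_mob_lt ha (mem_ball_zero_iff.1 hz))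

lemma sb_SP_dist {h : ℂ → ℂ} (hd : DifferentiableOn ℂ h (ball 0 1))
    (hm : MapsTo h (ball 0 1) (ball 0 1)) {z : ℂ} (hz : z ∈ ball 0 1) :
    ‖h z‖ * (1 + ‖h 0‖ * ‖z‖)
      ≤ ‖h 0‖ + ‖z‖ := by
  have ha : ‖h 0‖ < 1 := mem_ball_zero_iff.1 (hm (mem_ball_self one_pos))
  have hGd : DifferentiableOn ℂ ((fun w => (w - h 0) / (1 - (starRingEnd ℂ) (h 0) * w)) ∘ h)
      (ball 0 1) := (sb_mob_diffOn ha).comp hd hm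
  have hGm : MapsTo ((fun w => (w - h 0) / (1 - (starRingEnd ℂ) (h 0) * w)) ∘ h)
      (ball 0 1) (ball 0 1) := (sb_mob_mapsTo ha).comp hm
  have hG0 : ((fun w => (w - h 0) / (1 - (starRingEnd ℂ) (h 0) * w)) ∘ h) 0 = 0 := by
    simp [Function.comp]
  have key := Complex.norm_le_norm_of_mapsTo_ball hGd (hGm.mono_right ball_subset_closedBall) hG0 (mem_ball_zero_iff.1 hz)
  simp only [Function.comp, norm_div] at key
  have hs1 : ‖h z‖ < 1 := mem_ball_zero_iff.1 (hm hz)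
  have ht1 : ‖z‖ < 1 := mem_ball_zero_iff.1 hz
  have hden : (1 : ℂ) - (starRingEnd ℂ) (h 0) * h z ≠ 0 := sb_den_ne ha hs1
  have hdenpos : 0 < ‖1 - (starRingEnd ℂ) (h 0) * h z‖ := norm_pos_iff.mpr hden
  rw [div_le_iff₀ hdenpos] at key
  have key2 : Complex.normSq (h z - h 0)
      ≤ ‖z‖ ^ 2 * Complex.normSq (1 - (starRingEnd ℂ) (h 0) * h z) := by
    rw [← Complex.sq_norm, ← Complex.sq_norm]
    nlinarith [norm_nonneg (h z - h 0), norm_nonneg z, hdenpos.le]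
  have e1 : Complex.normSq (h z - h 0) = Complex.normSq (h z) + Complex.normSq (h 0)
      - 2 * ((starRingEnd ℂ) (h 0) * h z).re := by
    simp only [Complex.normSq_apply, Complex.mul_re, Complex.sub_re, Complex.sub_im,
      Complex.conj_re, Complex.conj_im]
    ring
  have e2 : Complex.normSq (1 - (starRingEnd ℂ) (h 0) * h z)
      = 1 + Complex.normSq (h 0) * Complex.normSq (h z)
        - 2 * ((starRingEnd ℂ) (h 0) * h z).re := by
    simp only [Complex.normSq_apply, Complex.mul_re, Complex.mul_im, Complex.sub_re,
      Complex.sub_im, Complex.one_re, Complex.one_im, Complex.conj_re, Complex.conj_im]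
    ring
  have e3 : ((starRingEnd ℂ) (h 0) * h z).re ≤ ‖h 0‖ * ‖h z‖ := by
    calc ((starRingEnd ℂ) (h 0) * h z).re ≤ ‖(starRingEnd ℂ) (h 0) * h z‖ :=
          Complex.re_le_norm _
      _ = ‖h 0‖ * ‖h z‖ := by rw [norm_mul, Complex.norm_conj]
  have hsa : Complex.normSq (h 0) = ‖h 0‖ ^ 2 := (Complex.sq_norm (h 0)).symm
  have hss : Complex.normSq (h z) = ‖h z‖ ^ 2 := (Complex.sq_norm (h z)).symm
  rw [e1, e2, hsa, hss] at key2
  have e4 : 0 ≤ (‖h 0‖ * ‖h z‖ - ((starRingEnd ℂ) (h 0) * h z).re)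
      * (1 - ‖z‖ ^ 2) := by
    apply mul_nonneg (by linarith) (by nlinarith [norm_nonneg z])
  have hA2B2 : (‖h z‖ - ‖h 0‖) ^ 2
      ≤ (‖z‖ * (1 - ‖h 0‖ * ‖h z‖)) ^ 2 := by nlinarith
  have hB0 : 0 ≤ ‖z‖ * (1 - ‖h 0‖ * ‖h z‖) := by
    apply mul_nonneg (norm_nonneg z) (by nlinarith [norm_nonneg (h 0)])
  nlinarith [sq_nonneg ((‖h z‖ - ‖h 0‖)
    + ‖z‖ * (1 - ‖h 0‖ * ‖h z‖))]

lemma sb_SP_deriv {h : ℂ → ℂ} (hd : DifferentiableOn ℂ h (ball 0 1))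
    (hm : MapsTo h (ball 0 1) (ball 0 1)) {z : ℂ} (hz : z ∈ ball 0 1) :
    ‖deriv h z‖ * (1 - ‖z‖ ^ 2) ≤ 1 - ‖h z‖ ^ 2 := by
  have ht1 : ‖z‖ < 1 := mem_ball_zero_iff.1 hz
  have hb : ‖h z‖ < 1 := mem_ball_zero_iff.1 (hm hz)
  have hnz : ‖-z‖ < 1 := by rwa [norm_neg]
  -- φ = Möbius with parameter -z,  φ 0 = z
  have hφd : DifferentiableOn ℂ (fun w => (w - -z) / (1 - (starRingEnd ℂ) (-z) * w))
      (ball 0 1) := sb_mob_diffOn hnz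
  have hφm : MapsTo (fun w => (w - -z) / (1 - (starRingEnd ℂ) (-z) * w)) (ball 0 1) (ball 0 1) :=
    sb_mob_mapsTo hnz
  have hφ0 : ((0 : ℂ) - -z) / (1 - (starRingEnd ℂ) (-z) * 0) = z := by simp
  -- F = mob (h z) ∘ h ∘ φ
  set F : ℂ → ℂ := (fun w => (w - h z) / (1 - (starRingEnd ℂ) (h z) * w)) ∘ h ∘
    (fun w => (w - -z) / (1 - (starRingEnd ℂ) (-z) * w)) with hF
  have hFd : DifferentiableOn ℂ F (ball 0 1) :=
    ((sb_mob_diffOn hb).comp hd hm).comp hφd hφm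
  have hFm : MapsTo F (ball 0 1) (ball 0 1) :=
    (((sb_mob_mapsTo hb).comp hm).comp hφm)
  have hF0 : F 0 = 0 := by
    simp only [hF, Function.comp, hφ0, sub_self, zero_div]
  have hDF := Complex.norm_deriv_le_one_of_mapsTo_ball hFd (by rw [hF0]; exact hFm.mono_right ball_subset_closedBall) one_pos
  -- compute deriv F 0
  have hder_φ : HasDerivAt (fun w => (w - -z) / (1 - (starRingEnd ℂ) (-z) * w))
      ((1 - (starRingEnd ℂ) (-z) * (-z)) / (1 - (starRingEnd ℂ) (-z) * 0) ^ 2) 0 :=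
    sb_mob_hasDerivAt hnz (by simp)
  have hder_h : HasDerivAt h (deriv h z) z :=
    (hd.differentiableAt (isOpen_ball.mem_nhds hz)).hasDerivAt
  have hder_m : HasDerivAt (fun w => (w - h z) / (1 - (starRingEnd ℂ) (h z) * w))
      ((1 - (starRingEnd ℂ) (h z) * h z) / (1 - (starRingEnd ℂ) (h z) * h z) ^ 2) (h z) :=
    sb_mob_hasDerivAt hb hb
  have hcomp1 : HasDerivAt (h ∘ (fun w => (w - -z) / (1 - (starRingEnd ℂ) (-z) * w)))
      (deriv h z * ((1 - (starRingEnd ℂ) (-z) * (-z)) / (1 - (starRingEnd ℂ) (-z) * 0) ^ 2)) 0 := by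
    refine HasDerivAt.comp 0 ?_ hder_φ
    rwa [hφ0]
  have hcomp2 : HasDerivAt F
      (((1 - (starRingEnd ℂ) (h z) * h z) / (1 - (starRingEnd ℂ) (h z) * h z) ^ 2)
        * (deriv h z * ((1 - (starRingEnd ℂ) (-z) * (-z)) / (1 - (starRingEnd ℂ) (-z) * 0) ^ 2))) 0 := by
    refine HasDerivAt.comp 0 ?_ hcomp1
    show HasDerivAt _ _ ((h ∘ _) 0)
    simpa [Function.comp, hφ0] using hder_m
  have hderF := hcomp2.deriv
  rw [hderF] at hDF
  -- simplify the absolute value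
  have hzz : (starRingEnd ℂ) (-z) * (-z) = ((Complex.normSq z : ℝ) : ℂ) := by
    rw [mul_comm]
    simpa using (Complex.mul_conj (-z))
  have hbb : (starRingEnd ℂ) (h z) * h z = ((Complex.normSq (h z) : ℝ) : ℂ) := by
    rw [mul_comm]; exact Complex.mul_conj (h z)
  have hnb : Complex.normSq (h z) < 1 := by
    rw [← Complex.sq_norm]; nlinarith [norm_nonneg (h z)]
  have hnz2 : Complex.normSq z < 1 := by
    rw [← Complex.sq_norm]; nlinarith [norm_nonneg z]
  rw [norm_mul, norm_mul, norm_div, norm_div, norm_pow, norm_pow] at hDF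
  rw [hzz, hbb] at hDF
  have habs1 : ‖(1 : ℂ) - ((Complex.normSq (h z) : ℝ) : ℂ)‖ = 1 - Complex.normSq (h z) := by
    rw [show (1 : ℂ) - ((Complex.normSq (h z) : ℝ) : ℂ) = (((1 - Complex.normSq (h z) : ℝ)) : ℂ) by push_cast; ring]
    rw [Complex.norm_real, Real.norm_eq_abs, abs_of_pos (by linarith)]
  have habs2 : ‖(1 : ℂ) - ((Complex.normSq z : ℝ) : ℂ)‖ = 1 - Complex.normSq z := by
    rw [show (1 : ℂ) - ((Complex.normSq z : ℝ) : ℂ) = (((1 - Complex.normSq z : ℝ)) : ℂ) by push_cast; ring]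
    rw [Complex.norm_real, Real.norm_eq_abs, abs_of_pos (by linarith)]
  rw [habs1, habs2] at hDF
  simp only [mul_zero, sub_zero, norm_one, one_pow, div_one] at hDF
  have hb1 : 0 < 1 - Complex.normSq (h z) := by linarith
  rw [show (1 - Complex.normSq (h z)) / (1 - Complex.normSq (h z)) ^ 2
      = 1 / (1 - Complex.normSq (h z)) by field_simp] at hDF
  rw [one_div_mul_eq_div, div_le_one hb1] at hDF
  rw [Complex.sq_norm, Complex.sq_norm]
  exact hDF



set_option maxHeartbeats 1000000 in
theorem schwarzian_bound_improves_suita_large_alpha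
    (f : ℂ → ℂ) (α : ℝ) (hα0 : 1 / 2 < α) (hα1 : α < 1)
    (hf : DifferentiableOn ℂ f (Metric.ball 0 1))
    (hf' : ∀ z ∈ Metric.ball (0:ℂ) 1, deriv f z ≠ 0)
    (hf0 : f 0 = 0) (hf1 : deriv f 0 = 1)
    (hconv : ∀ z ∈ Metric.ball (0:ℂ) 1,
      α < (1 + z * (deriv (deriv f) z / deriv f z)).re)
    (p : ℝ) (hp : p = ‖deriv (deriv f) 0‖ / (2 * (1 - α)))
    (hpb : p ≤ (3 * α - 1) / (5 * α - 1)) :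
    2 * (1 - α) * (1 + α * ((1 + p) / (1 - p))) ≤ 8 * α * (1 - α) ∧
    ∀ z ∈ Metric.ball (0:ℂ) 1,
      (1 - ‖z‖ ^ 2) ^ 2 *
        ‖deriv (deriv (deriv f)) z / deriv f z
          - 3 / 2 * (deriv (deriv f) z / deriv f z) ^ 2‖ ≤ 8 * α * (1 - α) := by
  have hc : (0:ℝ) < 2 * (1 - α) := by linarith
  have hp0 : 0 ≤ p := by rw [hp]; positivity
  have h5α : (0:ℝ) < 5 * α - 1 := by linarith
  have hp1 : p < 1 := lt_of_le_of_lt hpb (by rw [div_lt_one h5α]; linarith)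
  constructor
  · -- first conjunct
    have h1p : (0:ℝ) < 1 - p := by linarith
    have hpb' : p * (5 * α - 1) ≤ 3 * α - 1 := by
      rw [le_div_iff₀ h5α] at hpb; exact hpb
    have key : α * ((1 + p) / (1 - p)) ≤ 4 * α - 1 := by
      rw [← mul_div_assoc, div_le_iff₀ h1p]
      nlinarith
    nlinarith
  · intro z hz
    have hball : IsOpen (ball (0:ℂ) 1) := isOpen_ball
    have h0m : (0:ℂ) ∈ ball (0:ℂ) 1 := mem_ball_self one_pos
    have hfa : AnalyticOnNhd ℂ f (ball 0 1) := hf.analyticOnNhd hball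
    have hf1a : AnalyticOnNhd ℂ (deriv f) (ball 0 1) := hfa.deriv
    have hf2a : AnalyticOnNhd ℂ (deriv (deriv f)) (ball 0 1) := hf1a.deriv
    set P : ℂ → ℂ := fun ζ => deriv (deriv f) ζ / deriv f ζ with hPdef
    have hPd : DifferentiableOn ℂ P (ball 0 1) :=
      hf2a.differentiableOn.div hf1a.differentiableOn (fun ζ hζ => hf' ζ hζ)
    set g : ℂ → ℂ := fun ζ => ζ * P ζ with hgdef
    have hgd : DifferentiableOn ℂ g (ball 0 1) := differentiableOn_id.mul hPd
    have hgre : ∀ ζ ∈ ball (0:ℂ) 1, α - 1 < (g ζ).re := by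
      intro ζ hζ
      have := hconv ζ hζ
      rw [Complex.add_re, Complex.one_re] at this
      linarith
    set cc : ℂ := ((2 * (1 - α) : ℝ) : ℂ) with hccdef
    have hccne : cc ≠ 0 := by
      simp only [hccdef, ne_eq, Complex.ofReal_eq_zero]; linarith
    have hden : ∀ ζ ∈ ball (0:ℂ) 1, g ζ + cc ≠ 0 := by
      intro ζ hζ h
      have h2 := congrArg Complex.re h
      rw [Complex.add_re, Complex.ofReal_re, Complex.zero_re] at h2
      have := hgre ζ hζ
      linarith
    set w : ℂ → ℂ := fun ζ => g ζ / (g ζ + cc) with hwdef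
    have hwd : DifferentiableOn ℂ w (ball 0 1) :=
      hgd.div (hgd.add_const cc) hden
    have hg0 : g 0 = 0 := by simp [hgdef]
    have hw0 : w 0 = 0 := by simp [hwdef, hg0]
    have hwlt : ∀ ζ ∈ ball (0:ℂ) 1, ‖w ζ‖ < 1 := by
      intro ζ hζ
      have hdζ := hden ζ hζ
      have hnsq : Complex.normSq (g ζ) < Complex.normSq (g ζ + cc) := by
        rw [Complex.normSq_apply, Complex.normSq_apply, Complex.add_re, Complex.add_im,
          Complex.ofReal_re, Complex.ofReal_im]
        have := hgre ζ hζ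
        nlinarith
      have habs : ‖g ζ‖ < ‖g ζ + cc‖ := by
        refine lt_of_pow_lt_pow_left₀ 2 (norm_nonneg _) ?_
        rw [Complex.sq_norm, Complex.sq_norm]; exact hnsq
      rw [hwdef]
      simp only [norm_div]
      rw [div_lt_one (lt_of_le_of_lt (norm_nonneg _) habs)]
      exact habs
    have hwm : MapsTo w (ball (0:ℂ) 1) (ball (0:ℂ) 1) :=
      fun ζ hζ => mem_ball_zero_iff.2 (hwlt ζ hζ)
    set u : ℂ → ℂ := dslope w 0 with hudef
    have hud : DifferentiableOn ℂ u (ball 0 1) :=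
      (Complex.differentiableOn_dslope (hball.mem_nhds h0m)).mpr hwd
    have hule : ∀ ζ ∈ ball (0:ℂ) 1, ‖u ζ‖ ≤ 1 := by
      intro ζ hζ
      have := Complex.norm_dslope_le_div_of_mapsTo_ball hwd (by rw [hw0]; exact hwm.mono_right ball_subset_closedBall) hζ
      simpa using this
    -- u 0 and p
    have hPz0 : P 0 = deriv (deriv f) 0 := by rw [hPdef]; simp [hf1]
    have hgP : HasDerivAt g (P 0) 0 := by
      have hP0 : HasDerivAt P (deriv P 0) 0 :=
        (hPd.differentiableAt (hball.mem_nhds h0m)).hasDerivAt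
      have := (hasDerivAt_id (0:ℂ)).mul hP0
      exact this.congr_deriv (by simp)
    have hwP : HasDerivAt w (P 0 / cc) 0 := by
      have h2 : HasDerivAt (fun ζ => g ζ + cc) (P 0) 0 := hgP.add_const cc
      have h3 := hgP.div h2 (hden 0 h0m)
      have : (P 0 * (g 0 + cc) - g 0 * P 0) / (g 0 + cc) ^ 2 = P 0 / cc := by
        rw [hg0, zero_add, zero_mul, sub_zero, pow_two, mul_div_mul_right _ _ hccne]
      rwa [this] at h3
    have hu0 : u 0 = deriv (deriv f) 0 / cc := by
      rw [hudef, dslope_same, hwP.deriv, hPz0]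
    have hpu : ‖u 0‖ = p := by
      rw [hu0, norm_div, hp, hccdef, Complex.norm_real, Real.norm_eq_abs, abs_of_pos hc]
    -- |u| < 1 on the ball
    have hult : ∀ ζ ∈ ball (0:ℂ) 1, ‖u ζ‖ < 1 := by
      intro ζ hζ
      rcases lt_or_ge (‖u ζ‖) 1 with h | h
      · exact h
      exfalso
      have heq : ‖u ζ‖ = 1 := le_antisymm (hule ζ hζ) h
      have hmax : IsMaxOn (norm ∘ u) (ball (0:ℂ) 1) ζ := by
        intro y hy
        simp only [Function.comp, heq]
        exact hule y hy
      have heqOn := Complex.norm_eqOn_of_isPreconnected_of_isMaxOn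
        (convex_ball (0:ℂ) 1).isPreconnected hball hud hζ hmax
      have h0 := heqOn h0m
      simp only [Function.comp, Function.const, heq] at h0
      rw [hpu] at h0
      linarith
    have hum : MapsTo u (ball (0:ℂ) 1) (ball (0:ℂ) 1) :=
      fun ζ hζ => mem_ball_zero_iff.2 (hult ζ hζ)
    -- function identity w = ζ * u ζ
    have hw_zu : ∀ ζ : ℂ, w ζ = ζ * u ζ := by
      intro ζ
      rcases eq_or_ne ζ 0 with rfl | hζ
      · simp [hw0]
      · rw [hudef, dslope_of_ne _ hζ, slope_def_field, hw0]
        field_simp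
        ring
    -- P = cc * u / (1 - w) on the ball
    have honew : ∀ ζ ∈ ball (0:ℂ) 1, (1:ℂ) - w ζ ≠ 0 := by
      intro ζ hζ h
      have hw1 : w ζ = 1 := by linear_combination -h
      have hlt := hwlt ζ hζ
      rw [hw1] at hlt
      simp at hlt
    have hI1 : ∀ ζ ∈ ball (0:ℂ) 1, P ζ = cc * u ζ / (1 - w ζ) := by
      intro ζ hζ
      rcases eq_or_ne ζ 0 with rfl | hζ0
      · rw [hw0, hu0, hPz0]
        field_simp
        ring
      · have huζ : u ζ = w ζ / ζ := by
          rw [hudef, dslope_of_ne _ hζ0, slope_def_field, hw0]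
          field_simp
          ring
        rw [eq_div_iff (honew ζ hζ), huζ, hwdef]
        have hgζ : g ζ = ζ * P ζ := rfl
        field_simp [hden ζ hζ]
        ring
    -- Everything at the point z
    have hz1 : ‖z‖ < 1 := mem_ball_zero_iff.1 hz
    have honez : (1:ℂ) - w z ≠ 0 := honew z hz
    have huz : HasDerivAt u (deriv u z) z :=
      (hud.differentiableAt (hball.mem_nhds hz)).hasDerivAt
    have hwz : HasDerivAt w (u z + z * deriv u z) z := by
      have hfun : w = fun ζ => ζ * u ζ := funext hw_zu
      rw [hfun]
      exact ((hasDerivAt_id z).mul huz).congr_deriv (by simp)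
    -- deriv P z two ways
    have hf1z : HasDerivAt (deriv f) (deriv (deriv f) z) z :=
      ((hf1a z hz).differentiableAt).hasDerivAt
    have hf2z : HasDerivAt (deriv (deriv f)) (deriv (deriv (deriv f)) z) z :=
      ((hf2a z hz).differentiableAt).hasDerivAt
    have hPz : HasDerivAt P ((deriv (deriv (deriv f)) z * deriv f z
        - deriv (deriv f) z * deriv (deriv f) z) / (deriv f z) ^ 2) z :=
      hf2z.div hf1z (hf' z hz)
    have hQz : HasDerivAt (fun ζ => cc * u ζ / (1 - w ζ))
        ((cc * deriv u z * (1 - w z) - cc * u z * (-(u z + z * deriv u z))) / (1 - w z) ^ 2) z :=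
      (huz.const_mul cc).div (hwz.const_sub 1) honez
    have hPQ : deriv P z = (cc * deriv u z * (1 - w z)
        - cc * u z * (-(u z + z * deriv u z))) / (1 - w z) ^ 2 := by
      have hev : P =ᶠ[nhds z] (fun ζ => cc * u ζ / (1 - w ζ)) :=
        Filter.eventuallyEq_of_mem (hball.mem_nhds hz) (fun ζ hζ => hI1 ζ hζ)
      rw [hev.deriv_eq, hQz.deriv]
    have hPz' : deriv P z = (deriv (deriv (deriv f)) z * deriv f z
        - deriv (deriv f) z * deriv (deriv f) z) / (deriv f z) ^ 2 := hPz.deriv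
    -- the Schwarzian identity
    have hccα : cc = 2 - 2 * (α:ℂ) := by rw [hccdef]; push_cast; ring
    have hSf : deriv (deriv (deriv f)) z / deriv f z - 3 / 2 * (P z) ^ 2
        = cc * (deriv u z + (α:ℂ) * (u z) ^ 2) / (1 - w z) ^ 2 := by
      have h1 : deriv (deriv (deriv f)) z / deriv f z - 3 / 2 * (P z) ^ 2
          = deriv P z - 1 / 2 * (P z) ^ 2 := by
        rw [hPz', hPdef]
        field_simp [hf' z hz]
        ring
      rw [h1, hPQ, hI1 z hz, hw_zu z, hccα]
      have honez' : (1:ℂ) - z * u z ≠ 0 := by rwa [hw_zu z] at honez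
      field_simp
      ring
    -- absolute values
    have habs : ‖deriv (deriv (deriv f)) z / deriv f z - 3 / 2 * (P z) ^ 2‖
        = (2 * (1 - α)) * ‖deriv u z + (α:ℂ) * (u z) ^ 2‖
          / ‖1 - w z‖ ^ 2 := by
      rw [hSf, norm_div, norm_mul, norm_pow, hccdef, Complex.norm_real, Real.norm_eq_abs, abs_of_pos hc]
    -- numeric estimates
    have hSPd := sb_SP_deriv hud hum hz
    have hSPdist := sb_SP_dist hud hum hz
    rw [hpu] at hSPdist
    have ht0 : 0 ≤ ‖z‖ := norm_nonneg z
    have hv0 : 0 ≤ ‖u z‖ := norm_nonneg _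
    have hv1 : ‖u z‖ ≤ 1 := hule z hz
    have hd0 : 0 ≤ ‖deriv u z‖ := norm_nonneg _
    have hkey := sb_key α p (‖z‖) (‖u z‖) hα0 hα1 hp0 hp1
      ht0 hz1 hv0 hv1 hSPdist
    have htv : 0 < 1 - ‖z‖ * ‖u z‖ := by nlinarith
    have hmge : 1 - ‖z‖ * ‖u z‖ ≤ ‖1 - w z‖ := by
      have h1 : ‖w z‖ = ‖z‖ * ‖u z‖ := by
        rw [hw_zu z, norm_mul]
      calc 1 - ‖z‖ * ‖u z‖
          = ‖(1:ℂ)‖ - ‖w z‖ := by rw [h1]; simp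
        _ ≤ ‖1 - w z‖ := by
            have := norm_sub_norm_le (1:ℂ) (w z)
            simpa using this
    rw [habs]
    have ht2 : 0 < 1 - ‖z‖ ^ 2 := by nlinarith
    have hN : ‖deriv u z + (α:ℂ) * u z ^ 2‖
        ≤ ‖deriv u z‖ + α * ‖u z‖ ^ 2 := by
      refine le_trans (norm_add_le _ _) ?_
      rw [norm_mul, norm_pow, Complex.norm_real, Real.norm_eq_abs, abs_of_nonneg (by linarith : (0:ℝ) ≤ α)]
    have hN0 : 0 ≤ ‖deriv u z + (α:ℂ) * u z ^ 2‖ := norm_nonneg _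
    have hm2 : (1 - ‖z‖ * ‖u z‖) ^ 2 ≤ ‖1 - w z‖ ^ 2 := by
      nlinarith
    have hmpos : 0 < ‖1 - w z‖ := norm_pos_iff.mpr honez
    have hub : (1 - ‖z‖ ^ 2) ^ 2 * (‖deriv u z‖ + α * ‖u z‖ ^ 2)
        ≤ 4 * α * (1 - ‖z‖ * ‖u z‖) ^ 2 := by
      nlinarith [mul_le_mul_of_nonneg_left hSPd ht2.le]
    have hx1 : (1 - ‖z‖ ^ 2) ^ 2 * ‖deriv u z + (α:ℂ) * u z ^ 2‖
        ≤ (1 - ‖z‖ ^ 2) ^ 2 * (‖deriv u z‖ + α * ‖u z‖ ^ 2) :=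
      mul_le_mul_of_nonneg_left hN (by positivity)
    have h8 : (1 - ‖z‖ ^ 2) ^ 2 *
        (2 * (1 - α) * ‖deriv u z + (α:ℂ) * u z ^ 2‖)
        ≤ 8 * α * (1 - α) * (1 - ‖z‖ * ‖u z‖) ^ 2 := by
      nlinarith [hx1, hub]
    have h9 : 8 * α * (1 - α) * (1 - ‖z‖ * ‖u z‖) ^ 2
        ≤ 8 * α * (1 - α) * ‖1 - w z‖ ^ 2 :=
      mul_le_mul_of_nonneg_left hm2 (by nlinarith)
    rw [mul_div_assoc', div_le_iff₀ (by positivity)]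
    calc (1 - ‖z‖ ^ 2) ^ 2 *
        (2 * (1 - α) * ‖deriv u z + (α:ℂ) * u z ^ 2‖)
        ≤ 8 * α * (1 - α) * (1 - ‖z‖ * ‖u z‖) ^ 2 := h8
      _ ≤ 8 * α * (1 - α) * ‖1 - w z‖ ^ 2 := h9
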